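/- Let P be a path from x to y. If α_0(P) = B, i.e., P can be traversed starting with zero charge and the final charge at y equals the full battery capacity B, then P is ascending (with respect to the zero schedule). -/
import Mathlib


open Finset

namespace EV

noncomputable section

/-- Charge after traversing `i` arcs of a path with arc gains `g`, battery capacity `B`,
initial charge `b`. -/
def charge (B b : ℝ) (g : ℕ → ℝ) : ℕ → ℝ
  | 0 => b
  | i + 1 => min (charge B b g i + g i) B

/-- The traversal of the path with `n` arcs is feasible from initial charge `b`. -/
def Feasible (B b : ℝ) (g : ℕ → ℝ) (n : ℕ) : Prop :=
  ∀ i < n, 0 ≤ charge B b g i + g i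

open Classical in
/-- Maximum final charge `α_b(P)` for a path `P` with `n` arc gains `g`,
as an extended real (`⊥ = -∞` if the traversal is infeasible). -/
def alpha (B b : ℝ) (g : ℕ → ℝ) (n : ℕ) : EReal :=
  if Feasible B b g n then ((charge B b g n : ℝ) : EReal) else ⊥

/-- Gain of the `i`-th vertex (0-indexed): the sum of the first `i` arc gains. -/
def vGain (g : ℕ → ℝ) (i : ℕ) : ℝ := ∑ t ∈ Finset.range i, g t

/-- `P` is traversable: `α_B(P) ≥ 0`, i.e. feasible from a full battery. -/
def Traversable (B : ℝ) (g : ℕ → ℝ) (n : ℕ) : Prop := Feasible B B g n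

/-- `C` is a charge drop schedule for a path with `n` arcs (vertices `0,…,n`):
no drop at the first vertex, all drops nonnegative. -/
def Schedule (C : ℕ → ℝ) (n : ℕ) : Prop := C 0 = 0 ∧ ∀ i ≤ n, 0 ≤ C i

/-- Gain of vertex `i` with respect to the charge drop schedule `C`. -/
def cGain (g C : ℕ → ℝ) (i : ℕ) : ℝ := vGain g i - ∑ t ∈ Finset.range (i + 1), C t

/-- `P` (with `n` arcs) is ascending with respect to the schedule `C`. -/
def AscendingC (B : ℝ) (g C : ℕ → ℝ) (n : ℕ) : Prop :=
  Traversable B g n ∧ ∀ i ≤ n, 0 ≤ cGain g C i ∧ cGain g C i ≤ cGain g C n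

/-- `P` (with `n` arcs) is descending with respect to the schedule `C`. -/
def DescendingC (B : ℝ) (g C : ℕ → ℝ) (n : ℕ) : Prop :=
  Traversable B g n ∧ ∀ i ≤ n, cGain g C n ≤ cGain g C i ∧ cGain g C i ≤ 0

/-- `P` is monotone with respect to the schedule `C`. -/
def MonotoneC (B : ℝ) (g C : ℕ → ℝ) (n : ℕ) : Prop :=
  AscendingC B g C n ∨ DescendingC B g C n

/-- Ascending with respect to the zero schedule. -/
def Ascending (B : ℝ) (g : ℕ → ℝ) (n : ℕ) : Prop := AscendingC B g (fun _ => 0) n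

/-- Descending with respect to the zero schedule. -/
def Descending (B : ℝ) (g : ℕ → ℝ) (n : ℕ) : Prop := DescendingC B g (fun _ => 0) n

/-- Monotone with respect to the zero schedule. -/
def MonotonePath (B : ℝ) (g : ℕ → ℝ) (n : ℕ) : Prop := Ascending B g n ∨ Descending B g n

/-- The contiguous subpath whose arcs start at arc index `a`. -/
def SubPath (g : ℕ → ℝ) (a : ℕ) : ℕ → ℝ := fun t => g (a + t)

/-- Restriction of a charge drop schedule to the subpath starting at vertex `a`:
no drop at the subpath's first vertex. -/
def restrict (C : ℕ → ℝ) (a : ℕ) : ℕ → ℝ := fun t => if t = 0 then 0 else C (a + t)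

/-- First-arc-bounded with respect to a schedule `C` (no drop at the second vertex,
and all vertex gains lie between the gains of the first two vertices). -/
def FirstArcBoundedC (g C : ℕ → ℝ) (n : ℕ) : Prop :=
  C 1 = 0 ∧
    ((0 ≤ g 0 ∧ ∀ i ≤ n, 0 ≤ cGain g C i ∧ cGain g C i ≤ g 0) ∨
     (g 0 ≤ 0 ∧ ∀ i ≤ n, g 0 ≤ cGain g C i ∧ cGain g C i ≤ 0))

/-- Last-arc-bounded with respect to a schedule `C` (no drops at the last two vertices,
and all vertex gains lie between the gains of the last two vertices). -/
def LastArcBoundedC (g C : ℕ → ℝ) (n : ℕ) : Prop :=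
  C (n - 1) = 0 ∧ C n = 0 ∧
    ((0 ≤ g (n - 1) ∧ ∀ i ≤ n, cGain g C (n - 1) ≤ cGain g C i ∧ cGain g C i ≤ cGain g C n) ∨
     (g (n - 1) < 0 ∧ ∀ i ≤ n, cGain g C n ≤ cGain g C i ∧ cGain g C i ≤ cGain g C (n - 1)))

/-- First-arc-bounded (zero schedule). -/
def FirstArcBounded (g : ℕ → ℝ) (n : ℕ) : Prop := FirstArcBoundedC g (fun _ => 0) n

/-- Last-arc-bounded (zero schedule). -/
def LastArcBounded (g : ℕ → ℝ) (n : ℕ) : Prop := LastArcBoundedC g (fun _ => 0) n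

/-- Arc-bounded: first- or last-arc-bounded. -/
def ArcBounded (g : ℕ → ℝ) (n : ℕ) : Prop := FirstArcBounded g n ∨ LastArcBounded g n

/-- A funnel: arc-bounded and containing no monotone subpath of 2 or 3 consecutive arcs. -/
def Funnel (B : ℝ) (g : ℕ → ℝ) (n : ℕ) : Prop :=
  ArcBounded g n ∧ ∀ a m, (m = 2 ∨ m = 3) → a + m ≤ n → ¬ MonotonePath B (SubPath g a) m

/-- `j = s̄(i)`: the maximal index `j ≥ i` (among arcs of a path with `n` arcs) such that
the subpath of arcs `i,…,j` is first-arc-bounded. -/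
def IsSbar (g : ℕ → ℝ) (n i j : ℕ) : Prop :=
  i ≤ j ∧ j < n ∧ FirstArcBounded (SubPath g i) (j - i + 1) ∧
    ∀ j', i ≤ j' → j' < n → FirstArcBounded (SubPath g i) (j' - i + 1) → j' ≤ j

/-- `j = s̲(i)`: the minimal index `j ≤ i` such that the subpath of arcs `j,…,i`
is last-arc-bounded. -/
def IsSlow (g : ℕ → ℝ) (n i j : ℕ) : Prop :=
  j ≤ i ∧ i < n ∧ LastArcBounded (SubPath g j) (i - j + 1) ∧
    ∀ j', j' ≤ i → LastArcBounded (SubPath g j') (i - j' + 1) → j ≤ j'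

/-- Arc gains of the walk around a cycle with `m` arc gains `g`, starting at vertex `a`. -/
def cyc (g : ℕ → ℝ) (m a : ℕ) : ℕ → ℝ := fun t => g ((a + t) % m)

/-- A walk of length `ℓ` from `x` to `y` in the directed graph with arc relation `A`. -/
def IsWalk {V : Type*} (A : V → V → Prop) (w : ℕ → V) (ℓ : ℕ) (x y : V) : Prop :=
  w 0 = x ∧ w ℓ = y ∧ ∀ t < ℓ, A (w t) (w (t + 1))

/-- The sequence of arc gains induced by a walk `w` in a graph with gain function `g`. -/
def walkGains {V : Type*} (g : V → V → ℝ) (w : ℕ → V) : ℕ → ℝ :=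
  fun t => g (w t) (w (t + 1))

/-- If `α_0(P) = B`, i.e. `P` can be traversed starting with zero charge and
the final charge equals the full battery capacity `B`, then `P` is ascending. -/
lemma charge_le_cap (B b : ℝ) (g : ℕ → ℝ) (hb : b ≤ B) : ∀ i, charge B b g i ≤ B
  | 0 => hb
  | i + 1 => min_le_right _ _

lemma charge_le_sum (B b : ℝ) (g : ℕ → ℝ) : ∀ i, charge B b g i ≤ b + vGain g i
  | 0 => by simp [charge, vGain]
  | i + 1 => by
      have := charge_le_sum B b g i
      simp only [charge, vGain, Finset.sum_range_succ]
      calc min (charge B b g i + g i) B ≤ charge B b g i + g i := min_le_left _ _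
        _ ≤ b + (∑ t ∈ Finset.range i, g t) + g i := by
              simp only [vGain] at this; linarith
        _ = b + ((∑ t ∈ Finset.range i, g t) + g i) := by ring

lemma charge_nonneg (B : ℝ) (hB : 0 ≤ B) (g : ℕ → ℝ) (n : ℕ) (hf : Feasible B 0 g n) :
    ∀ i ≤ n, 0 ≤ charge B 0 g i := by
  intro i hi
  induction i with
  | zero => simp [charge]
  | succ i ih =>
      have h1 : 0 ≤ charge B 0 g i + g i := hf i (by omega)
      simpa [charge] using le_min h1 hB

lemma charge_mono_b (B b b' : ℝ) (g : ℕ → ℝ) (h : b ≤ b') :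
    ∀ i, charge B b g i ≤ charge B b' g i
  | 0 => h
  | i + 1 => by
      have := charge_mono_b B b b' g h i
      simp only [charge]
      exact min_le_min (by linarith) le_rfl

lemma charge_le_of_le (B b : ℝ) (g : ℕ → ℝ) (i j : ℕ) (hij : i ≤ j) :
    charge B b g j ≤ charge B b g i + (vGain g j - vGain g i) := by
  induction j with
  | zero =>
      have : i = 0 := by omega
      simp [this]
  | succ j ih =>
      rcases Nat.lt_or_ge i (j + 1) with hlt | hge
      · have hij' : i ≤ j := by omega
        have := ih hij'
        simp only [charge, vGain, Finset.sum_range_succ]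
        calc min (charge B b g j + g j) B ≤ charge B b g j + g j := min_le_left _ _
          _ ≤ charge B b g i + ((∑ t ∈ Finset.range j, g t) - vGain g i) + g j := by
              have h2 := ih hij'
              simp only [vGain] at h2 ⊢
              linarith
          _ = charge B b g i + ((∑ t ∈ Finset.range j, g t) + g j - vGain g i) := by ring
      · have : i = j + 1 := by omega
        simp [this]

/-- If `α_0(P) = B`, i.e. `P` can be traversed starting with zero charge and
the final charge equals the full battery capacity `B`, then `P` is ascending. -/
theorem ascending_of_alpha_zero_eq_full (B : ℝ) (hB : 0 < B) (g : ℕ → ℝ) (n : ℕ)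
    (h : alpha B 0 g n = ((B : ℝ) : EReal)) :
    Ascending B g n := by
  have hf : Feasible B 0 g n := by
    by_contra hc
    simp [alpha, hc] at h
  have hend : charge B 0 g n = B := by
    simp only [alpha, if_pos hf] at h
    exact_mod_cast h
  have hfB : Feasible B B g n := by
    intro i hi
    have := charge_mono_b B 0 B g hB.le i
    have h1 := hf i hi
    linarith
  have hcg : ∀ i, cGain g (fun _ => 0) i = vGain g i := by
    intro i; simp [cGain]
  constructor
  · exact hfB
  · intro i hi
    have h0 : 0 ≤ charge B 0 g i := charge_nonneg B hB.le g n hf i hi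
    have h1 : charge B 0 g i ≤ 0 + vGain g i := charge_le_sum B 0 g i
    have h2 : charge B 0 g n ≤ charge B 0 g i + (vGain g n - vGain g i) :=
      charge_le_of_le B 0 g i n hi
    have h3 : charge B 0 g i ≤ B := charge_le_cap B 0 g hB.le i
    rw [hcg, hcg]
    constructor
    · linarith
    · rw [hend] at h2; linarith

end

end EV
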